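/- Let H be a real inner product space, let φ : H → ℝ, let α₀, α ∈ H, let v* ∈ H with v* ≠ 0, let s > 0, and set u* := v*/s. Let τ > 0, F > 0 and r ∈ ℝ, and put a := ⟨v*, α − α₀⟩ and b := ‖v*‖²/s (so b > 0). Assume: (a) the map t ↦ φ(α + t·u*) is continuous on [−τ, τ]; (b) |φ(α + t·u*) − φ(α₀) − a − t·b| ≤ F for all t ∈ [−τ, τ]; (c) (|r − a| + 2F)/b ≤ τ. Then there exists t ∈ ℝ with |t| ≤ (|r − a| + 2F)/b (hence |t| ≤ τ) such that φ(α + t·u*) = φ(α₀) + r. -/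

import Mathlib

/-- Lemma B.2 (fixed-n analytic content): solving `φ(α + t·u*) = φ(α₀) + r` along the
scaled Riesz representer direction `u* = v*/s`, given a uniform linearization error
bound `F` on `[−τ, τ]` and the step-size compatibility condition `(|r−a|+2F)/b ≤ τ`,
where `a = ⟨v*, α−α₀⟩` and `b = ‖v*‖²/s`. -/
theorem stmt6 {H : Type*} [NormedAddCommGroup H] [InnerProductSpace ℝ H]
    (φ : H → ℝ) (α₀ α vstar : H) (hv : vstar ≠ 0) (s : ℝ) (hs : 0 < s)
    (ustar : H) (hu : ustar = s⁻¹ • vstar)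
    (τ F r : ℝ) (hτ : 0 < τ) (hF : 0 < F)
    (a b : ℝ) (ha : a = (inner ℝ vstar (α - α₀) : ℝ)) (hb : b = ‖vstar‖ ^ 2 / s)
    (hcont : ContinuousOn (fun t : ℝ => φ (α + t • ustar)) (Set.Icc (-τ) τ))
    (hbound : ∀ t ∈ Set.Icc (-τ) τ, |φ (α + t • ustar) - φ α₀ - a - t * b| ≤ F)
    (hstep : (|r - a| + 2 * F) / b ≤ τ) :
    ∃ t : ℝ, |t| ≤ (|r - a| + 2 * F) / b ∧ φ (α + t • ustar) = φ α₀ + r := by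
  have hbpos : 0 < b := by
    have h0 : 0 < ‖vstar‖ := norm_pos_iff.2 hv
    rw [hb]
    exact div_pos (by positivity) hs
  set T : ℝ := (|r - a| + 2 * F) / b with hT
  have hTpos : 0 < T := div_pos (by positivity) hbpos
  have hsub : Set.Icc (-T) T ⊆ Set.Icc (-τ) τ :=
    Set.Icc_subset_Icc (by linarith) hstep
  have hTb : T * b = |r - a| + 2 * F := by
    rw [hT]; exact div_mul_cancel₀ _ hbpos.ne'
  set f : ℝ → ℝ := fun t => φ (α + t • ustar) with hf
  have hmemT : T ∈ Set.Icc (-τ) τ := ⟨by linarith, hstep⟩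
  have hmemnT : (-T) ∈ Set.Icc (-τ) τ := ⟨by linarith, by linarith⟩
  have h1 := abs_le.1 (hbound T hmemT)
  have h2 := abs_le.1 (hbound (-T) hmemnT)
  have hra := abs_le.1 (le_refl |r - a|)
  have hfT : φ α₀ + r ≤ f T := by
    have := h1.1
    simp only [hf] at this ⊢
    nlinarith [hra.1, hra.2]
  have hfnT : f (-T) ≤ φ α₀ + r := by
    have := h2.2
    simp only [hf] at this ⊢
    nlinarith [hra.1, hra.2]
  have : (φ α₀ + r) ∈ Set.Icc (f (-T)) (f T) := ⟨hfnT, hfT⟩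
  obtain ⟨t, ht, hft⟩ := intermediate_value_Icc (by linarith : -T ≤ T)
    (hcont.mono hsub) this
  exact ⟨t, abs_le.2 ⟨ht.1, ht.2⟩, hft⟩
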